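/- For every integer n ≥ 1, the total number of partial matchings of [n] with no neighbor alignments equals Σ_{k=0}^{⌊n/2⌋} e_k(1, 2, ..., n-k), where e_k denotes the elementary symmetric polynomial. -/

import Mathlib

open Finset

/-- `(i, j)` is an arc of the linear representation of the set partition `P` of
`{1, ..., n}`: `i < j`, both lie in the same block, and no element of that block
lies strictly between them. -/
def IsArc {n : ℕ} (P : Finpartition (Finset.Icc 1 n)) (a : ℕ × ℕ) : Prop :=
  a.1 < a.2 ∧ ∃ B ∈ P.parts, a.1 ∈ B ∧ a.2 ∈ B ∧ ∀ c ∈ B, ¬ (a.1 < c ∧ c < a.2)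

/-- The number of arcs of a set partition. -/
noncomputable def numArcs {n : ℕ} (P : Finpartition (Finset.Icc 1 n)) : ℕ :=
  {a : ℕ × ℕ | IsArc P a}.ncard

/-- A partial matching: every block has at most two elements. -/
def IsMatching {n : ℕ} (P : Finpartition (Finset.Icc 1 n)) : Prop :=
  ∀ B ∈ P.parts, B.card ≤ 2

/-- A neighbor alignment: arcs `(i₁, j₁)`, `(i₂, j₂)` with `i₁ < j₁ < i₂ < j₂`
and `j₁ + 1 = i₂`. -/
def HasNbrAlign {n : ℕ} (P : Finpartition (Finset.Icc 1 n)) : Prop :=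
  ∃ a b : ℕ × ℕ, IsArc P a ∧ IsArc P b ∧ a.2 + 1 = b.1

/-- A left nesting: arcs `(i₁, j₁)`, `(i₂, j₂)` with `i₁ < i₂ < j₂ < j₁`
and `i₁ + 1 = i₂`. -/
def HasLeftNesting {n : ℕ} (P : Finpartition (Finset.Icc 1 n)) : Prop :=
  ∃ a b : ℕ × ℕ, IsArc P a ∧ IsArc P b ∧ a.1 + 1 = b.1 ∧ b.2 < a.2

/-- A right nesting: arcs `(i₁, j₁)`, `(i₂, j₂)` with `i₁ < i₂ < j₂ < j₁`
and `j₂ + 1 = j₁`. -/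
def HasRightNesting {n : ℕ} (P : Finpartition (Finset.Icc 1 n)) : Prop :=
  ∃ a b : ℕ × ℕ, IsArc P a ∧ IsArc P b ∧ a.1 < b.1 ∧ b.2 + 1 = a.2

/-- The number of left crossings: pairs of arcs `(i₁, j₁)`, `(i₂, j₂)` with
`i₁ < i₂ < j₁ < j₂` and `i₁ + 1 = i₂`. -/
noncomputable def numLeftCrossings {n : ℕ} (P : Finpartition (Finset.Icc 1 n)) : ℕ :=
  {p : (ℕ × ℕ) × (ℕ × ℕ) |
    IsArc P p.1 ∧ IsArc P p.2 ∧ p.1.1 + 1 = p.2.1 ∧ p.2.1 < p.1.2 ∧ p.1.2 < p.2.2}.ncard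

/-- The number of transients: elements of a block that are neither the minimum
nor the maximum of their block. -/
noncomputable def numTransients {n : ℕ} (P : Finpartition (Finset.Icc 1 n)) : ℕ :=
  {x : ℕ | ∃ B ∈ P.parts, x ∈ B ∧ (∃ y ∈ B, y < x) ∧ (∃ y ∈ B, x < y)}.ncard

/-- `Pnum n k`: the number of partial matchings of `[n]` with exactly `k` arcs
and no neighbor alignments. -/
noncomputable def Pnum (n k : ℕ) : ℕ :=
  {P : Finpartition (Finset.Icc 1 n) |
    IsMatching P ∧ numArcs P = k ∧ ¬ HasNbrAlign P}.ncard

/-- `Qnum n k`: the number of partial matchings of `[n]` with exactly `k` arcs,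
no neighbor alignments and no left nestings. -/
noncomputable def Qnum (n k : ℕ) : ℕ :=
  {P : Finpartition (Finset.Icc 1 n) |
    IsMatching P ∧ numArcs P = k ∧ ¬ HasNbrAlign P ∧ ¬ HasLeftNesting P}.ncard

/-- `Rnum n k`: the number of partial matchings of `[n]` with exactly `k` arcs,
no neighbor alignments, no left nestings and no right nestings. -/
noncomputable def Rnum (n k : ℕ) : ℕ :=
  {P : Finpartition (Finset.Icc 1 n) |
    IsMatching P ∧ numArcs P = k ∧ ¬ HasNbrAlign P ∧ ¬ HasLeftNesting P ∧
      ¬ HasRightNesting P}.ncard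

/-- `Tnum n k`: the number of set partitions of `[n]` with exactly `k` arcs and
no right nestings. -/
noncomputable def Tnum (n k : ℕ) : ℕ :=
  {P : Finpartition (Finset.Icc 1 n) | numArcs P = k ∧ ¬ HasRightNesting P}.ncard

/-- `Stirling m b`: the Stirling number of the second kind, the number of set
partitions of `{1, ..., m}` into `b` blocks. -/
noncomputable def Stirling (m b : ℕ) : ℕ :=
  {P : Finpartition (Finset.Icc 1 m) | P.parts.card = b}.ncard

def arcOK (n : ℕ) (A : Finset (ℕ × ℕ)) : Prop :=
  (∀ p ∈ A, 1 ≤ p.1 ∧ p.1 < p.2 ∧ p.2 ≤ n) ∧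
  (∀ p ∈ A, ∀ q ∈ A, p ≠ q → p.1 ≠ q.1 ∧ p.1 ≠ q.2 ∧ p.2 ≠ q.1 ∧ p.2 ≠ q.2) ∧
  (∀ p ∈ A, ∀ q ∈ A, p.2 + 1 ≠ q.1)

instance (n : ℕ) : DecidablePred (arcOK n) := fun A => by
  unfold arcOK; infer_instance

def MAll (n : ℕ) : Finset (Finset (ℕ × ℕ)) :=
  ((Finset.Icc 1 n ×ˢ Finset.Icc 1 n).powerset).filter (arcOK n)

def MFin (n k : ℕ) : Finset (Finset (ℕ × ℕ)) :=
  (MAll n).filter (fun A => A.card = k)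

lemma mem_MAll {n : ℕ} {A : Finset (ℕ × ℕ)} : A ∈ MAll n ↔ arcOK n A := by
  constructor
  · intro h; exact (mem_filter.mp h).2
  · intro h
    refine mem_filter.mpr ⟨mem_powerset.mpr ?_, h⟩
    intro p hp
    obtain ⟨h1, h2, h3⟩ := h.1 p hp
    exact mem_product.mpr ⟨mem_Icc.mpr ⟨h1, le_trans (le_of_lt h2) h3⟩,
      mem_Icc.mpr ⟨le_trans h1 (le_of_lt h2), h3⟩⟩

lemma mem_MFin {n k : ℕ} {A : Finset (ℕ × ℕ)} :
    A ∈ MFin n k ↔ arcOK n A ∧ A.card = k := by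
  simp [MFin, mem_MAll, mem_filter]

/-- insertion relabeling -/
def insF (t x : ℕ) : ℕ := if x ≤ t then x else x + 1

lemma insF_lt {t x y : ℕ} (h : x < y) : insF t x < insF t y := by
  unfold insF; split <;> split <;> omega

lemma insF_inj {t : ℕ} : Function.Injective (insF t) := by
  intro x y h; unfold insF at h; split at h <;> split at h <;> omega

lemma insF_ne_succ (t x : ℕ) : insF t x ≠ t + 1 := by
  unfold insF; split <;> omega

lemma insF_le (t x : ℕ) : insF t x ≤ x + 1 := by unfold insF; split <;> omega
lemma le_insF (t x : ℕ) : x ≤ insF t x := by unfold insF; split <;> omega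

def insP (t : ℕ) (p : ℕ × ℕ) : ℕ × ℕ := (insF t p.1, insF t p.2)

lemma insP_inj {t : ℕ} : Function.Injective (insP t) := by
  intro p q h
  unfold insP at h
  have h1 := congrArg Prod.fst h
  have h2 := congrArg Prod.snd h
  simp at h1 h2
  exact Prod.ext (insF_inj h1) (insF_inj h2)

/-- deletion relabeling -/
def delF (i x : ℕ) : ℕ := if x < i then x else x - 1

lemma insF_delF {i x : ℕ} (hi : 1 ≤ i) (hx : x ≠ i) : insF (i - 1) (delF i x) = x := by
  unfold insF delF; split <;> split <;> omega

lemma delF_insF {t x : ℕ} : delF (t + 1) (insF t x) = x := by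
  unfold insF delF; split <;> split <;> omega

def delP (i : ℕ) (p : ℕ × ℕ) : ℕ × ℕ := (delF i p.1, delF i p.2)



lemma MFin_zero (n : ℕ) : MFin n 0 = {∅} := by
  ext A
  simp only [mem_MFin, mem_singleton, Finset.card_eq_zero]
  constructor
  · rintro ⟨-, h⟩; exact h
  · rintro rfl
    refine ⟨⟨?_, ?_, ?_⟩, rfl⟩ <;> intro p hp <;> simp at hp

lemma MFin_one (k : ℕ) (hk : 1 ≤ k) : MFin 1 k = ∅ := by
  ext A
  simp only [mem_MFin, notMem_empty, iff_false]
  rintro ⟨⟨hb, -, -⟩, hc⟩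
  have : A.Nonempty := by
    rw [← Finset.card_pos, hc]; omega
  obtain ⟨p, hp⟩ := this
  have := hb p hp
  omega

/-- splitting by whether `n` is matched -/
lemma MFin_split (n k : ℕ) :
    (MFin n k).card
      = ((MFin n k).filter (fun A => ∃ p ∈ A, p.2 = n)).card
        + ((MFin n k).filter (fun A => ¬ ∃ p ∈ A, p.2 = n)).card :=
  (Finset.card_filter_add_card_filter_not _).symm

lemma MFin_unmatched (n k : ℕ) (hn : 1 ≤ n) :
    (MFin n k).filter (fun A => ¬ ∃ p ∈ A, p.2 = n) = MFin (n - 1) k := by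
  ext A
  simp only [mem_filter, mem_MFin, not_exists, not_and]
  constructor
  · rintro ⟨⟨⟨hb, hd, hna⟩, hc⟩, hnot⟩
    refine ⟨⟨?_, hd, hna⟩, hc⟩
    intro p hp
    have := hb p hp
    have := hnot p hp
    omega
  · rintro ⟨⟨hb, hd, hna⟩, hc⟩
    refine ⟨⟨⟨?_, hd, hna⟩, hc⟩, ?_⟩
    · intro p hp; have := hb p hp; omega
    · intro p hp; have := hb p hp; omega

def slots (n : ℕ) (A' : Finset (ℕ × ℕ)) : Finset ℕ :=
  (Finset.range (n - 1)).filter (fun t => ∀ p ∈ A', p.2 ≠ t)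

def Phi (n : ℕ) (A' : Finset (ℕ × ℕ)) (t : ℕ) : Finset (ℕ × ℕ) :=
  insert (t + 1, n) (A'.image (insP t))

lemma slots_card {n k : ℕ} (hk : 1 ≤ k) {A' : Finset (ℕ × ℕ)}
    (h : A' ∈ MFin (n - 2) (k - 1)) : (slots n A').card = n - k := by
  obtain ⟨⟨hb, hd, -⟩, hc⟩ := mem_MFin.mp h
  have hinj : Set.InjOn Prod.snd (A' : Set (ℕ × ℕ)) := by
    intro p hp q hq hpq
    by_contra hne
    exact ((hd p hp q hq hne).2.2.2) hpq
  have hseq : slots n A' = Finset.range (n - 1) \ A'.image Prod.snd := by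
    ext t
    simp only [slots, mem_filter, mem_sdiff, mem_image, not_exists, not_and]
  rw [hseq, card_sdiff_of_subset]
  · rw [Finset.card_image_of_injOn hinj, hc, Finset.card_range]
    omega
  · intro x hx
    obtain ⟨p, hp, rfl⟩ := mem_image.mp hx
    have := hb p hp
    simp only [mem_range]
    omega

lemma Phi_mem {n k : ℕ} (hn : 2 ≤ n) (hk : 1 ≤ k) {A' : Finset (ℕ × ℕ)} {t : ℕ}
    (hA : A' ∈ MFin (n - 2) (k - 1)) (ht : t ∈ slots n A') :
    Phi n A' t ∈ (MFin n k).filter (fun A => ∃ p ∈ A, p.2 = n) := by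
  obtain ⟨⟨hb, hd, hna⟩, hc⟩ := mem_MFin.mp hA
  simp only [slots, mem_filter, mem_range] at ht
  obtain ⟨htn, hts⟩ := ht
  have hnotmem : ((t + 1 : ℕ), n) ∉ A'.image (insP t) := by
    intro hmem
    obtain ⟨p, hp, he⟩ := mem_image.mp hmem
    have h2 := congrArg Prod.snd he
    have hb' := hb p hp
    have := insF_le t p.2
    simp only [insP] at h2
    omega
  refine mem_filter.mpr ⟨mem_MFin.mpr ⟨⟨?_, ?_, ?_⟩, ?_⟩, ⟨(t+1, n), mem_insert_self _ _, rfl⟩⟩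
  · -- bounds
    intro p hp
    rcases mem_insert.mp hp with rfl | hp
    · exact ⟨by omega, by omega, le_refl _⟩
    · obtain ⟨q, hq, rfl⟩ := mem_image.mp hp
      obtain ⟨h1, h2, h3⟩ := hb q hq
      have := le_insF t q.1
      have := insF_le t q.2
      exact ⟨by simp [insP]; omega, insF_lt h2, by simp [insP]; omega⟩
  · -- disjointness
    intro p hp q hq hne
    rcases mem_insert.mp hp with rfl | hp <;> rcases mem_insert.mp hq with rfl | hq
    · exact absurd rfl hne
    · obtain ⟨b, hbq, rfl⟩ := mem_image.mp hq
      have h1 := insF_ne_succ t b.1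
      have h2 := insF_ne_succ t b.2
      have hb' := hb b hbq
      have := insF_le t b.1
      have := insF_le t b.2
      simp only [insP]
      refine ⟨fun h => h1 h.symm, fun h => h2 h.symm, ?_, ?_⟩ <;> intro h <;> omega
    · obtain ⟨a, haq, rfl⟩ := mem_image.mp hp
      have h1 := insF_ne_succ t a.1
      have h2 := insF_ne_succ t a.2
      have hb' := hb a haq
      have := insF_le t a.1
      have := insF_le t a.2
      simp only [insP]
      refine ⟨h1, ?_, h2, ?_⟩ <;> intro h <;> omega
    · obtain ⟨a, ha, rfl⟩ := mem_image.mp hp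
      obtain ⟨b, hbq, rfl⟩ := mem_image.mp hq
      have hab : a ≠ b := fun h => hne (by rw [h])
      obtain ⟨d1, d2, d3, d4⟩ := hd a ha b hbq hab
      simp only [insP]
      exact ⟨fun h => d1 (insF_inj h), fun h => d2 (insF_inj h),
        fun h => d3 (insF_inj h), fun h => d4 (insF_inj h)⟩
  · -- no neighbor alignment
    intro p hp q hq
    rcases mem_insert.mp hp with rfl | hp <;> rcases mem_insert.mp hq with rfl | hq
    · simp only []; omega
    · obtain ⟨b, hbq, rfl⟩ := mem_image.mp hq
      have hb' := hb b hbq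
      have := insF_le t b.1
      have := le_insF t b.1
      simp only [insP]
      omega
    · obtain ⟨a, ha, rfl⟩ := mem_image.mp hp
      have hb' := hb a ha
      have hat := hts a ha
      simp only [insP, insF]
      split <;> omega
    · obtain ⟨a, ha, rfl⟩ := mem_image.mp hp
      obtain ⟨b, hbq, rfl⟩ := mem_image.mp hq
      have hna' := hna a ha b hbq
      simp only [insP, insF]
      split <;> split <;> omega
  · -- cardinality
    rw [Phi, card_insert_of_notMem hnotmem, Finset.card_image_of_injective _ insP_inj, hc]
    omega

lemma delF_lt {i a b : ℕ} (h : a < b) (ha : a ≠ i) (hb : b ≠ i) :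
    delF i a < delF i b := by
  unfold delF; split <;> split <;> omega

lemma delF_injOn {i a b : ℕ} (ha : a ≠ i) (hb : b ≠ i) (h : delF i a = delF i b) :
    a = b := by
  unfold delF at h; split at h <;> split at h <;> omega

lemma Phi_snd_eq {n : ℕ} (hn : 2 ≤ n) {A' : Finset (ℕ × ℕ)} {t : ℕ}
    (hb : ∀ p ∈ A', 1 ≤ p.1 ∧ p.1 < p.2 ∧ p.2 ≤ n - 2)
    {x : ℕ × ℕ} (hx : x ∈ Phi n A' t) (hxn : x.2 = n) : x = (t + 1, n) := by
  rcases mem_insert.mp hx with rfl | hx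
  · rfl
  · obtain ⟨q, hq, rfl⟩ := mem_image.mp hx
    have := (hb q hq).2.2
    have := insF_le t q.2
    simp only [insP] at hxn ⊢
    omega

lemma Phi_inj {n k : ℕ} (hn : 2 ≤ n) {A₁ A₂ : Finset (ℕ × ℕ)} {t₁ t₂ : ℕ}
    (h₁ : A₁ ∈ MFin (n - 2) (k - 1)) (h₂ : A₂ ∈ MFin (n - 2) (k - 1))
    (he : Phi n A₁ t₁ = Phi n A₂ t₂) : A₁ = A₂ ∧ t₁ = t₂ := by
  obtain ⟨⟨hb₁, -, -⟩, -⟩ := mem_MFin.mp h₁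
  obtain ⟨⟨hb₂, -, -⟩, -⟩ := mem_MFin.mp h₂
  have hmem : ((t₁ + 1 : ℕ), n) ∈ Phi n A₂ t₂ := he ▸ mem_insert_self _ _
  have ht : ((t₁ + 1 : ℕ), n) = ((t₂ + 1 : ℕ), n) := Phi_snd_eq hn hb₂ hmem rfl
  have htt : t₁ = t₂ := by
    have := congrArg Prod.fst ht; simp at this; omega
  subst htt
  refine ⟨?_, rfl⟩
  have hni : ∀ (A : Finset (ℕ × ℕ)), (∀ p ∈ A, 1 ≤ p.1 ∧ p.1 < p.2 ∧ p.2 ≤ n - 2) →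
      ((t₁ + 1 : ℕ), n) ∉ A.image (insP t₁) := by
    intro A hb hmem
    obtain ⟨q, hq, hqe⟩ := mem_image.mp hmem
    have := (hb q hq).2.2
    have := insF_le t₁ q.2
    have := congrArg Prod.snd hqe
    simp only [insP] at this
    omega
  have himg : A₁.image (insP t₁) = A₂.image (insP t₁) := by
    have e1 : A₁.image (insP t₁) = (Phi n A₁ t₁).erase ((t₁ + 1 : ℕ), n) := by
      rw [Phi, Finset.erase_insert (hni A₁ hb₁)]
    have e2 : A₂.image (insP t₁) = (Phi n A₂ t₁).erase ((t₁ + 1 : ℕ), n) := by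
      rw [Phi, Finset.erase_insert (hni A₂ hb₂)]
    rw [e1, e2, he]
  exact Finset.image_injective insP_inj himg

lemma Phi_surj {n k : ℕ} (hn : 2 ≤ n) (hk : 1 ≤ k) {B : Finset (ℕ × ℕ)}
    (hB : B ∈ (MFin n k).filter (fun A => ∃ p ∈ A, p.2 = n)) :
    ∃ A' ∈ MFin (n - 2) (k - 1), ∃ t ∈ slots n A', Phi n A' t = B := by
  obtain ⟨hBM, p₀, hp₀, hp₀n⟩ := mem_filter.mp hB
  obtain ⟨⟨hb, hd, hna⟩, hc⟩ := mem_MFin.mp hBM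
  set i := p₀.1 with hi
  have hib : 1 ≤ i ∧ i < n := by
    have := hb p₀ hp₀; omega
  -- facts about the other arcs
  have hfacts : ∀ p ∈ B.erase p₀, (1 ≤ p.1 ∧ p.1 < p.2 ∧ p.2 ≤ n - 1) ∧
      p.1 ≠ i ∧ p.2 ≠ i ∧ p.2 + 1 ≠ i := by
    intro p hp
    obtain ⟨hpne, hpB⟩ := Finset.mem_erase.mp hp
    obtain ⟨h1, h2, h3⟩ := hb p hpB
    obtain ⟨d1, d2, d3, d4⟩ := hd p hpB p₀ hp₀ hpne
    have hnaB := hna p hpB p₀ hp₀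
    refine ⟨⟨h1, h2, ?_⟩, d1, d3, hnaB⟩
    omega
  refine ⟨(B.erase p₀).image (delP i), ?_, i - 1, ?_, ?_⟩
  · -- membership in MFin (n-2) (k-1)
    have hinj : Set.InjOn (delP i) ((B.erase p₀ : Finset (ℕ × ℕ)) : Set (ℕ × ℕ)) := by
      intro p hp q hq hpq
      simp only [Finset.coe_mem, mem_coe] at hp hq
      obtain ⟨-, hp1, hp2, -⟩ := hfacts p hp
      obtain ⟨-, hq1, hq2, -⟩ := hfacts q hq
      have e1 := congrArg Prod.fst hpq
      have e2 := congrArg Prod.snd hpq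
      simp only [delP] at e1 e2
      exact Prod.ext (delF_injOn hp1 hq1 e1) (delF_injOn hp2 hq2 e2)
    refine mem_MFin.mpr ⟨⟨?_, ?_, ?_⟩, ?_⟩
    · intro q hq
      obtain ⟨p, hp, rfl⟩ := mem_image.mp hq
      obtain ⟨⟨h1, h2, h3⟩, d1, d3, -⟩ := hfacts p hp
      refine ⟨?_, delF_lt h2 d1 d3, ?_⟩ <;> simp only [delP, delF] <;> split <;> omega
    · intro q hq q' hq' hne
      obtain ⟨p, hp, rfl⟩ := mem_image.mp hq
      obtain ⟨p', hp', rfl⟩ := mem_image.mp hq'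
      have hpne : p ≠ p' := fun h => hne (by rw [h])
      obtain ⟨hpb, hp1, hp2, -⟩ := hfacts p hp
      obtain ⟨hpb', hp1', hp2', -⟩ := hfacts p' hp'
      obtain ⟨hpe, he1, he2, he3⟩ := hd p (mem_of_mem_erase hp) p' (mem_of_mem_erase hp') hpne
      simp only [delP]
      exact ⟨fun h => hpe (delF_injOn hp1 hp1' h), fun h => he1 (delF_injOn hp1 hp2' h),
        fun h => he2 (delF_injOn hp2 hp1' h), fun h => he3 (delF_injOn hp2 hp2' h)⟩
    · intro q hq q' hq'
      obtain ⟨p, hp, rfl⟩ := mem_image.mp hq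
      obtain ⟨p', hp', rfl⟩ := mem_image.mp hq'
      obtain ⟨hpb, hp1, hp2, hp3⟩ := hfacts p hp
      obtain ⟨hpb', hp1', hp2', hp3'⟩ := hfacts p' hp'
      have hnaB := hna p (mem_of_mem_erase hp) p' (mem_of_mem_erase hp')
      simp only [delP, delF]
      split <;> split <;> omega
    · rw [Finset.card_image_of_injOn hinj, Finset.card_erase_of_mem hp₀, hc]
  · -- i - 1 ∈ slots
    simp only [slots, mem_filter, mem_range]
    refine ⟨by omega, ?_⟩
    intro q hq
    obtain ⟨p, hp, rfl⟩ := mem_image.mp hq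
    obtain ⟨hpb, -, hp2, hp3⟩ := hfacts p hp
    simp only [delP, delF]
    split <;> omega
  · -- Phi equals B
    have hid : ∀ p ∈ B.erase p₀, insP (i - 1) (delP i p) = p := by
      intro p hp
      obtain ⟨-, hp1, hp2, -⟩ := hfacts p hp
      exact Prod.ext (insF_delF hib.1 hp1) (insF_delF hib.1 hp2)
    have hp₀eq : ((i - 1 + 1 : ℕ), n) = p₀ := by
      have : i - 1 + 1 = i := by omega
      rw [this, hi]
      exact Prod.ext rfl hp₀n.symm
    rw [Phi, Finset.image_image]
    have h2 : Finset.image (insP (i - 1) ∘ delP i) (B.erase p₀)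
        = Finset.image id (B.erase p₀) :=
      Finset.image_congr (fun p hp => hid p (Finset.mem_coe.mp hp))
    rw [h2, Finset.image_id, hp₀eq, Finset.insert_erase hp₀]

lemma matched_card (n k : ℕ) (hn : 2 ≤ n) (hk : 1 ≤ k) :
    ((MFin n k).filter (fun A => ∃ p ∈ A, p.2 = n)).card
      = (n - k) * (MFin (n - 2) (k - 1)).card := by
  have hbij : ((MFin (n - 2) (k - 1)).sigma (slots n)).card
      = ((MFin n k).filter (fun A => ∃ p ∈ A, p.2 = n)).card := by
    refine Finset.card_bij (fun x _ => Phi n x.1 x.2) ?_ ?_ ?_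
    · intro x hx
      obtain ⟨h1, h2⟩ := Finset.mem_sigma.mp hx
      exact Phi_mem hn hk h1 h2
    · intro x₁ hx₁ x₂ hx₂ he
      obtain ⟨h1, -⟩ := Finset.mem_sigma.mp hx₁
      obtain ⟨h2, -⟩ := Finset.mem_sigma.mp hx₂
      obtain ⟨hA, ht⟩ := Phi_inj (k := k) hn h1 h2 he
      exact Sigma.ext hA (heq_of_eq ht)
    · intro B hB
      obtain ⟨A', hA', t, ht, he⟩ := Phi_surj hn hk hB
      exact ⟨⟨A', t⟩, Finset.mem_sigma.mpr ⟨hA', ht⟩, he⟩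
  rw [← hbij, Finset.card_sigma]
  rw [Finset.sum_congr rfl (fun A' hA' => slots_card hk hA')]
  rw [Finset.sum_const, smul_eq_mul, mul_comm]

lemma MFin_card_rec (n k : ℕ) (hn : 2 ≤ n) (hk : 1 ≤ k) :
    (MFin n k).card
      = (MFin (n - 1) k).card + (n - k) * (MFin (n - 2) (k - 1)).card := by
  rw [MFin_split n k, MFin_unmatched n k (by omega), matched_card n k hn hk, Nat.add_comm]

def esym (m k : ℕ) : ℕ := ∑ S ∈ (Finset.Icc 1 m).powersetCard k, ∏ x ∈ S, x

lemma esym_zero (m : ℕ) : esym m 0 = 1 := by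
  simp [esym, Finset.powersetCard_zero]

lemma esym_bot (k : ℕ) (hk : 1 ≤ k) : esym 0 k = 0 := by
  have : Finset.Icc 1 0 = (∅ : Finset ℕ) := by simp
  rw [esym, this, Finset.powersetCard_eq_empty.mpr (by simp; omega), Finset.sum_empty]

lemma esym_rec (m k : ℕ) (hm : 1 ≤ m) (hk : 1 ≤ k) :
    esym m k = esym (m - 1) k + m * esym (m - 1) (k - 1) := by
  obtain ⟨k', rfl⟩ : ∃ k', k = k' + 1 := ⟨k - 1, by omega⟩
  have hIcc : Finset.Icc 1 m = insert m (Finset.Icc 1 (m - 1)) := by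
    ext x; simp only [mem_Icc, mem_insert]; omega
  have hm' : m ∉ Finset.Icc 1 (m - 1) := by simp only [mem_Icc]; omega
  have hdisj : Disjoint ((Finset.Icc 1 (m - 1)).powersetCard (k' + 1))
      (((Finset.Icc 1 (m - 1)).powersetCard k').image (insert m)) := by
    rw [Finset.disjoint_right]
    intro S hS hS2
    obtain ⟨T, hT, rfl⟩ := mem_image.mp hS
    have h1 : insert m T ⊆ Finset.Icc 1 (m - 1) := (Finset.mem_powersetCard.mp hS2).1
    exact hm' (h1 (mem_insert_self _ _))
  rw [esym, hIcc, Finset.powersetCard_succ_insert hm', Finset.sum_union hdisj]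
  congr 1
  rw [Finset.sum_image]
  · rw [esym]
    simp only [Nat.add_sub_cancel]
    rw [Finset.mul_sum]
    refine Finset.sum_congr rfl ?_
    intro S hS
    have hmS : m ∉ S := fun h => hm' ((Finset.mem_powersetCard.mp hS).1 h)
    rw [Finset.prod_insert hmS]
  · intro S hS T hT he
    have hmS : m ∉ S := fun h => hm' ((Finset.mem_powersetCard.mp hS).1 h)
    have hmT : m ∉ T := fun h => hm' ((Finset.mem_powersetCard.mp hT).1 h)
    rw [← Finset.erase_insert hmS, ← Finset.erase_insert hmT, he]

lemma MFin_bot (k : ℕ) (hk : 1 ≤ k) : MFin 0 k = ∅ := by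
  ext A
  simp only [mem_MFin, notMem_empty, iff_false]
  rintro ⟨⟨hb, -, -⟩, hc⟩
  have : A.Nonempty := by rw [← Finset.card_pos, hc]; omega
  obtain ⟨p, hp⟩ := this
  have := hb p hp
  omega

lemma MFin_card_eq : ∀ n k : ℕ, (MFin n k).card = esym (n - k) k := by
  intro n
  induction n using Nat.strong_induction_on with
  | _ n ih =>
    intro k
    rcases Nat.eq_zero_or_pos k with rfl | hk
    · rw [MFin_zero, esym_zero, Finset.card_singleton]
    rcases Nat.lt_or_ge n 2 with hn | hn
    · interval_cases n
      · rw [MFin_bot k hk, Finset.card_empty, Nat.zero_sub, esym_bot k hk]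
      · rw [MFin_one k hk, Finset.card_empty,
          show 1 - k = 0 by omega, esym_bot k hk]
    · rw [MFin_card_rec n k hn hk, ih (n - 1) (by omega), ih (n - 2) (by omega)]
      rcases Nat.lt_or_ge (n - 1) k with hge | hle
      · -- degenerate: k ≥ n
        rw [show n - 1 - k = 0 by omega, show n - k = 0 by omega,
          esym_bot k hk, Nat.zero_mul, Nat.add_zero]
      · rw [esym_rec (n - k) k (by omega) hk,
          show n - 1 - k = n - k - 1 by omega,
          show n - 2 - (k - 1) = n - k - 1 by omega]

lemma arc_card_le {n : ℕ} {A : Finset (ℕ × ℕ)} (h : arcOK n A) : A.card * 2 ≤ n := by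
  obtain ⟨hb, hd, -⟩ := h
  have hsub : A.biUnion (fun p => ({p.1, p.2} : Finset ℕ)) ⊆ Finset.Icc 1 n := by
    intro x hx
    obtain ⟨p, hp, hxp⟩ := Finset.mem_biUnion.mp hx
    have := hb p hp
    simp only [mem_insert, mem_singleton] at hxp
    simp only [mem_Icc]
    rcases hxp with rfl | rfl <;> omega
  have hcard : (A.biUnion (fun p => ({p.1, p.2} : Finset ℕ))).card = A.card * 2 := by
    rw [Finset.card_biUnion]
    · rw [Finset.sum_congr rfl (fun p hp => ?_), Finset.sum_const, smul_eq_mul]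
      have := (hb p hp).2.1
      rw [Finset.card_insert_of_notMem (by simp; omega), Finset.card_singleton]
    · intro p hp q hq hne
      obtain ⟨d1, d2, d3, d4⟩ := hd p hp q hq hne
      rw [Function.onFun, Finset.disjoint_left]
      intro x hx hx2
      simp only [mem_insert, mem_singleton] at hx hx2
      rcases hx with rfl | rfl <;> rcases hx2 with h | h <;> tauto
  have := Finset.card_le_card hsub
  rw [hcard] at this
  simpa using this

lemma MAll_card (n : ℕ) :
    (MAll n).card = ∑ k ∈ Finset.range (n / 2 + 1), (MFin n k).card := by
  refine Finset.card_eq_sum_card_fiberwise ?_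
  intro A hA
  have := arc_card_le (mem_MAll.mp hA)
  simp only [coe_range, Set.mem_Iio]
  omega

lemma MAll_card_eq (n : ℕ) :
    (MAll n).card = ∑ k ∈ Finset.range (n / 2 + 1),
      ∑ S ∈ (Finset.Icc 1 (n - k)).powersetCard k, ∏ x ∈ S, x := by
  rw [MAll_card]
  exact Finset.sum_congr rfl (fun k _ => MFin_card_eq n k)




/-- the arcs of a partition, as a finset -/
def arcsOf {n : ℕ} (P : Finpartition (Finset.Icc 1 n)) : Finset (ℕ × ℕ) :=
  ((Finset.Icc 1 n) ×ˢ (Finset.Icc 1 n)).filter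
    (fun p => p.1 < p.2 ∧ ({p.1, p.2} : Finset ℕ) ∈ P.parts)

lemma isArc_iff {n : ℕ} {P : Finpartition (Finset.Icc 1 n)} (hM : IsMatching P)
    {p : ℕ × ℕ} : IsArc P p ↔ p ∈ arcsOf P := by
  constructor
  · rintro ⟨hlt, B, hB, h1, h2, -⟩
    have hsub : ({p.1, p.2} : Finset ℕ) ⊆ B := by
      intro x hx
      simp only [mem_insert, mem_singleton] at hx
      rcases hx with rfl | rfl <;> assumption
    have hcard : ({p.1, p.2} : Finset ℕ).card = 2 := by
      rw [Finset.card_insert_of_notMem (by simp; omega), Finset.card_singleton]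
    have hBeq : ({p.1, p.2} : Finset ℕ) = B :=
      Finset.eq_of_subset_of_card_le hsub (by rw [hcard]; exact hM B hB)
    refine Finset.mem_filter.mpr ⟨?_, hlt, hBeq ▸ hB⟩
    have hb1 := P.le hB h1
    have hb2 := P.le hB h2
    exact Finset.mem_product.mpr ⟨hb1, hb2⟩
  · intro hmem
    obtain ⟨hprod, hlt, hpart⟩ := Finset.mem_filter.mp hmem
    refine ⟨hlt, {p.1, p.2}, hpart, by simp, by simp, ?_⟩
    intro c hc
    simp only [mem_insert, mem_singleton] at hc
    rcases hc with rfl | rfl <;> omega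

lemma pair_eq {a b c d : ℕ} (hab : a < b) (hcd : c < d)
    (h : ({a, b} : Finset ℕ) = {c, d}) : a = c ∧ b = d := by
  have h1 : a ∈ ({c, d} : Finset ℕ) := h ▸ (by simp)
  have h2 : b ∈ ({c, d} : Finset ℕ) := h ▸ (by simp)
  have h3 : c ∈ ({a, b} : Finset ℕ) := h ▸ (by simp)
  have h4 : d ∈ ({a, b} : Finset ℕ) := h ▸ (by simp)
  simp only [mem_insert, mem_singleton] at h1 h2 h3 h4
  omega

lemma arcsOf_mem_MAll {n : ℕ} {P : Finpartition (Finset.Icc 1 n)}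
    (hM : IsMatching P) (hNA : ¬ HasNbrAlign P) : arcsOf P ∈ MAll n := by
  refine mem_MAll.mpr ⟨?_, ?_, ?_⟩
  · intro p hp
    obtain ⟨hprod, hlt, -⟩ := Finset.mem_filter.mp hp
    obtain ⟨h1, h2⟩ := Finset.mem_product.mp hprod
    simp only [mem_Icc] at h1 h2
    omega
  · intro p hp q hq hne
    obtain ⟨hprodp, hltp, hpartp⟩ := Finset.mem_filter.mp hp
    obtain ⟨hprodq, hltq, hpartq⟩ := Finset.mem_filter.mp hq
    by_contra hcon
    push_neg at hcon
    have hshared : ∃ x, x ∈ ({p.1, p.2} : Finset ℕ) ∧ x ∈ ({q.1, q.2} : Finset ℕ) := by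
      rcases Decidable.em (p.1 = q.1) with h | h
      · exact ⟨p.1, by simp, by simp [h]⟩
      rcases Decidable.em (p.1 = q.2) with h2 | h2
      · exact ⟨p.1, by simp, by simp [h2]⟩
      rcases Decidable.em (p.2 = q.1) with h3 | h3
      · exact ⟨p.2, by simp, by simp [h3]⟩
      exact ⟨p.2, by simp, by simp [hcon h h2 h3]⟩
    obtain ⟨x, hx1, hx2⟩ := hshared
    have := P.eq_of_mem_parts hpartp hpartq hx1 hx2
    obtain ⟨e1, e2⟩ := pair_eq hltp hltq this
    exact hne (Prod.ext e1 e2)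
  · intro p hp q hq he
    exact hNA ⟨p, q, (isArc_iff hM).mpr hp, (isArc_iff hM).mpr hq, he⟩

lemma arcsOf_injOn {n : ℕ} {P₁ P₂ : Finpartition (Finset.Icc 1 n)}
    (h₁ : IsMatching P₁) (h₂ : IsMatching P₂) (he : arcsOf P₁ = arcsOf P₂) :
    P₁ = P₂ := by
  have key : ∀ (Q R : Finpartition (Finset.Icc 1 n)), IsMatching Q → IsMatching R →
      arcsOf Q = arcsOf R → Q.parts ⊆ R.parts := by
    intro Q R hQ hR hQR B hB
    have hcard : B.card ≤ 2 := hQ B hB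
    have hne : B.Nonempty := Finpartition.nonempty_of_mem_parts Q hB
    rcases Nat.lt_or_ge B.card 2 with h1 | h2
    · -- singleton
      have : B.card = 1 := by
        have := Finset.card_pos.mpr hne; omega
      obtain ⟨x, rfl⟩ := Finset.card_eq_one.mp this
      have hxIcc : x ∈ Finset.Icc 1 n := Q.le hB (by simp)
      obtain ⟨C, hC, hxC⟩ := R.exists_mem hxIcc
      rcases Nat.lt_or_ge C.card 2 with hc1 | hc2
      · have : C.card = 1 := by
          have := Finset.card_pos.mpr (Finpartition.nonempty_of_mem_parts R hC); omega
        obtain ⟨y, rfl⟩ := Finset.card_eq_one.mp this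
        have : x = y := by simpa using hxC
        subst this; exact hC
      · exfalso
        have : C.card = 2 := le_antisymm (hR C hC) hc2
        obtain ⟨c, d, hcd, rfl⟩ := Finset.card_eq_two.mp this
        -- order c, d
        have harc : ∃ a b : ℕ, a < b ∧ ({a, b} : Finset ℕ) = {c, d} := by
          rcases Nat.lt_or_ge c d with h | h
          · exact ⟨c, d, h, rfl⟩
          · exact ⟨d, c, by omega, by rw [Finset.pair_comm]⟩
        obtain ⟨a, b, hab, habe⟩ := harc
        have hmem : (a, b) ∈ arcsOf R := by
          refine Finset.mem_filter.mpr ⟨?_, hab, by rw [habe]; exact hC⟩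
          have hsub := R.le hC
          have ha : a ∈ Finset.Icc 1 n := hsub (by rw [← habe]; simp)
          have hb : b ∈ Finset.Icc 1 n := hsub (by rw [← habe]; simp)
          exact Finset.mem_product.mpr ⟨ha, hb⟩
        rw [← hQR] at hmem
        obtain ⟨-, -, hpart⟩ := Finset.mem_filter.mp hmem
        have := Q.eq_of_mem_parts (a := x) hB hpart (Finset.mem_singleton_self x)
          (by simpa [habe] using hxC)
        have hcard2 : ({x} : Finset ℕ).card = ({a, b} : Finset ℕ).card := by rw [this]
        rw [Finset.card_singleton, Finset.card_insert_of_notMem (by simp; omega),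
          Finset.card_singleton] at hcard2
        omega
    · -- pair
      have : B.card = 2 := le_antisymm hcard h2
      obtain ⟨c, d, hcd, rfl⟩ := Finset.card_eq_two.mp this
      have harc : ∃ a b : ℕ, a < b ∧ ({a, b} : Finset ℕ) = {c, d} := by
        rcases Nat.lt_or_ge c d with h | h
        · exact ⟨c, d, h, rfl⟩
        · exact ⟨d, c, by omega, by rw [Finset.pair_comm]⟩
      obtain ⟨a, b, hab, habe⟩ := harc
      rw [← habe] at hB ⊢
      have hmem : (a, b) ∈ arcsOf Q := by
        refine Finset.mem_filter.mpr ⟨?_, hab, hB⟩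
        have hsub := Q.le hB
        exact Finset.mem_product.mpr ⟨hsub (by simp), hsub (by simp)⟩
      rw [hQR] at hmem
      exact (Finset.mem_filter.mp hmem).2.2
  exact Finpartition.ext (le_antisymm (key P₁ P₂ h₁ h₂ he) (key P₂ P₁ h₂ h₁ he.symm))

def buildParts (n : ℕ) (A : Finset (ℕ × ℕ)) : Finset (Finset ℕ) :=
  A.image (fun p => ({p.1, p.2} : Finset ℕ)) ∪
    ((Finset.Icc 1 n).filter (fun x => ∀ p ∈ A, x ≠ p.1 ∧ x ≠ p.2)).image
      (fun x => ({x} : Finset ℕ))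

lemma mem_buildParts_sub {n : ℕ} {A : Finset (ℕ × ℕ)} (hA : arcOK n A)
    {B : Finset ℕ} (hB : B ∈ buildParts n A) : B ⊆ Finset.Icc 1 n := by
  obtain ⟨hb, -, -⟩ := hA
  rcases Finset.mem_union.mp hB with h | h
  · obtain ⟨p, hp, rfl⟩ := mem_image.mp h
    have := hb p hp
    intro x hx
    simp only [mem_insert, mem_singleton] at hx
    simp only [mem_Icc]
    rcases hx with rfl | rfl <;> omega
  · obtain ⟨x, hx, rfl⟩ := mem_image.mp h
    intro y hy
    simp only [mem_singleton] at hy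
    subst hy
    exact (Finset.mem_filter.mp hx).1

def buildP (n : ℕ) (A : Finset (ℕ × ℕ)) (hA : arcOK n A) :
    Finpartition (Finset.Icc 1 n) where
  parts := buildParts n A
  supIndep := by
    rw [Finset.supIndep_iff_pairwiseDisjoint]
    intro B hB C hC hne
    show Disjoint B C
    rw [Finset.disjoint_left]
    intro x hxB hxC
    obtain ⟨hb, hd, -⟩ := hA
    simp only [mem_coe] at hB hC
    rcases Finset.mem_union.mp hB with h | h <;> rcases Finset.mem_union.mp hC with h' | h'
    · obtain ⟨p, hp, rfl⟩ := mem_image.mp h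
      obtain ⟨q, hq, rfl⟩ := mem_image.mp h'
      have hpq : p ≠ q := fun hh => hne (by rw [hh])
      obtain ⟨d1, d2, d3, d4⟩ := hd p hp q hq hpq
      simp only [mem_insert, mem_singleton] at hxB hxC
      rcases hxB with rfl | rfl <;> rcases hxC with h | h <;> tauto
    · obtain ⟨p, hp, rfl⟩ := mem_image.mp h
      obtain ⟨y, hy, rfl⟩ := mem_image.mp h'
      have := (Finset.mem_filter.mp hy).2 p hp
      simp only [mem_insert, mem_singleton] at hxB
      simp only [mem_singleton] at hxC
      subst hxC
      rcases hxB with h | h <;> omega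
    · obtain ⟨y, hy, rfl⟩ := mem_image.mp h
      obtain ⟨p, hp, rfl⟩ := mem_image.mp h'
      have := (Finset.mem_filter.mp hy).2 p hp
      simp only [mem_insert, mem_singleton] at hxC
      simp only [mem_singleton] at hxB
      subst hxB
      rcases hxC with h | h <;> omega
    · obtain ⟨y, hy, rfl⟩ := mem_image.mp h
      obtain ⟨z, hz, rfl⟩ := mem_image.mp h'
      simp only [mem_singleton] at hxB hxC
      subst hxB; subst hxC
      exact hne rfl
  sup_parts := by
    apply le_antisymm
    · intro x hx
      rw [Finset.mem_sup] at hx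
      obtain ⟨B, hB, hxB⟩ := hx
      exact mem_buildParts_sub hA hB hxB
    · intro x hx
      rw [Finset.mem_sup]
      by_cases h : ∃ p ∈ A, x = p.1 ∨ x = p.2
      · obtain ⟨p, hp, hor⟩ := h
        refine ⟨{p.1, p.2}, Finset.mem_union_left _ (Finset.mem_image_of_mem _ hp), ?_⟩
        rcases hor with rfl | rfl <;> simp
      · push_neg at h
        refine ⟨{x}, Finset.mem_union_right _ ?_, Finset.mem_singleton_self x⟩
        refine Finset.mem_image_of_mem _ (Finset.mem_filter.mpr ⟨hx, ?_⟩)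
        intro p hp
        exact h p hp
  bot_notMem := by
    intro h
    rcases Finset.mem_union.mp h with h' | h'
    · obtain ⟨p, hp, he⟩ := mem_image.mp h'
      have : p.1 ∈ (⊥ : Finset ℕ) := he ▸ (by simp)
      simp at this
    · obtain ⟨x, hx, he⟩ := mem_image.mp h'
      have : x ∈ (⊥ : Finset ℕ) := he ▸ (by simp)
      simp at this

lemma buildP_matching {n : ℕ} {A : Finset (ℕ × ℕ)} (hA : arcOK n A) :
    IsMatching (buildP n A hA) := by
  intro B hB
  rcases Finset.mem_union.mp hB with h | h
  · obtain ⟨p, hp, rfl⟩ := mem_image.mp h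
    exact le_trans (Finset.card_insert_le _ _) (by simp)
  · obtain ⟨x, hx, rfl⟩ := mem_image.mp h
    simp

lemma buildP_arcsOf {n : ℕ} {A : Finset (ℕ × ℕ)} (hA : arcOK n A) :
    arcsOf (buildP n A hA) = A := by
  obtain ⟨hb, hd, hna⟩ := hA
  ext p
  constructor
  · intro hp
    obtain ⟨hprod, hlt, hpart⟩ := Finset.mem_filter.mp hp
    rcases Finset.mem_union.mp hpart with h | h
    · obtain ⟨q, hq, he⟩ := mem_image.mp h
      have hq' := hb q hq
      obtain ⟨e1, e2⟩ := pair_eq hq'.2.1 hlt he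
      have : p = q := Prod.ext e1.symm e2.symm
      rw [this]; exact hq
    · obtain ⟨x, hx, he⟩ := mem_image.mp h
      exfalso
      have h1 : p.1 ∈ ({x} : Finset ℕ) := by rw [he]; simp
      have h2 : p.2 ∈ ({x} : Finset ℕ) := by rw [he]; simp
      simp only [mem_singleton] at h1 h2
      omega
  · intro hp
    have hp' := hb p hp
    refine Finset.mem_filter.mpr ⟨?_, hp'.2.1, ?_⟩
    · exact Finset.mem_product.mpr ⟨mem_Icc.mpr ⟨by omega, by omega⟩,
        mem_Icc.mpr ⟨by omega, by omega⟩⟩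
    · exact Finset.mem_union_left _ (Finset.mem_image_of_mem _ hp)

lemma buildP_noNA {n : ℕ} {A : Finset (ℕ × ℕ)} (hA : arcOK n A) :
    ¬ HasNbrAlign (buildP n A hA) := by
  rintro ⟨a, b, ha, hb, he⟩
  have hM := buildP_matching hA
  have ha' : a ∈ A := by rw [← buildP_arcsOf hA]; exact (isArc_iff hM).mp ha
  have hb' : b ∈ A := by rw [← buildP_arcsOf hA]; exact (isArc_iff hM).mp hb
  exact hA.2.2 a ha' b hb' he

lemma bridge (n : ℕ) :
    {P : Finpartition (Finset.Icc 1 n) | IsMatching P ∧ ¬ HasNbrAlign P}.ncard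
      = (MAll n).card := by
  rw [← Set.ncard_coe_finset]
  have himg : arcsOf '' {P : Finpartition (Finset.Icc 1 n) |
      IsMatching P ∧ ¬ HasNbrAlign P} = ↑(MAll n) := by
    ext A
    simp only [Set.mem_image, Set.mem_setOf_eq, Finset.mem_coe]
    constructor
    · rintro ⟨P, ⟨hM, hNA⟩, rfl⟩
      exact arcsOf_mem_MAll hM hNA
    · intro hA
      exact ⟨buildP n A (mem_MAll.mp hA),
        ⟨buildP_matching _, buildP_noNA _⟩, buildP_arcsOf _⟩
  rw [← himg]
  rw [Set.ncard_image_of_injOn]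
  intro P₁ h₁ P₂ h₂ he
  exact arcsOf_injOn h₁.1 h₂.1 he


/-- The total number of partial matchings of `[n]` with no neighbor alignments
equals `∑_{k=0}^{⌊n/2⌋} e_k(1, 2, ..., n-k)`. -/
theorem stmt_2 (n : ℕ) (hn : 1 ≤ n) :
    {P : Finpartition (Finset.Icc 1 n) | IsMatching P ∧ ¬ HasNbrAlign P}.ncard =
      ∑ k ∈ Finset.range (n / 2 + 1),
        ∑ S ∈ (Finset.Icc 1 (n - k)).powersetCard k, ∏ x ∈ S, x := by
  rw [bridge, MAll_card_eq]
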